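/- Let x_1,...,x_m be sampled i.i.d. from a distribution D over R^d, and let delta in (0,1). Then with probability at least 1-delta over the sample, the probability (over a fresh independent x ~ D) that x is not in the span of x_1,...,x_m is at most d/(delta(m+1)). -/

import Mathlib

open MeasureTheory Set
open scoped ENNReal

variable {d m : ℕ}

/-- rational combinations are dense in the span -/
lemma span_mem_closure_rat (xs : Fin m → (Fin d → ℝ)) {x : Fin d → ℝ}
    (hx : x ∈ Submodule.span ℝ (Set.range xs)) :
    x ∈ closure {y : Fin d → ℝ | ∃ q : Fin m → ℚ, y = ∑ i, (q i : ℝ) • xs i} := by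
  obtain ⟨c, rfl⟩ := (Submodule.mem_span_range_iff_exists_fun ℝ).1 hx
  have hφ : Continuous (fun c : Fin m → ℝ => ∑ i, c i • xs i) := by
    continuity
  have hd : DenseRange (Pi.map (fun (_ : Fin m) (q : ℚ) => (q : ℝ))) := by
    rw [DenseRange, Set.range_piMap]
    exact dense_pi Set.univ (fun i _ => Rat.denseRange_cast)
  have hc : c ∈ closure (Set.range (Pi.map (fun (_ : Fin m) (q : ℚ) => (q : ℝ)))) := hd c
  have := image_closure_subset_closure_image hφ ⟨c, hc, rfl⟩
  refine closure_mono ?_ this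
  rintro y ⟨z, ⟨q, rfl⟩, rfl⟩
  exact ⟨q, rfl⟩

lemma span_set_eq :
    {p : (Fin m → (Fin d → ℝ)) × (Fin d → ℝ) | p.2 ∈ Submodule.span ℝ (Set.range p.1)}
      = ⋂ n : ℕ, ⋃ q : Fin m → ℚ,
          {p : (Fin m → (Fin d → ℝ)) × (Fin d → ℝ) |
            dist p.2 (∑ i, (q i : ℝ) • p.1 i) < 1 / (n + 1)} := by
  ext ⟨xs, x⟩
  simp only [Set.mem_setOf_eq, Set.mem_iInter, Set.mem_iUnion]
  constructor
  · intro hx n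
    have := span_mem_closure_rat xs hx
    rw [Metric.mem_closure_iff] at this
    obtain ⟨y, ⟨q, rfl⟩, hy⟩ := this (1 / (n + 1)) (by positivity)
    exact ⟨q, hy⟩
  · intro h
    have hcl : IsClosed (Submodule.span ℝ (Set.range xs) : Set (Fin d → ℝ)) :=
      Submodule.closed_of_finiteDimensional _
    have : x ∈ closure (Submodule.span ℝ (Set.range xs) : Set (Fin d → ℝ)) := by
      rw [Metric.mem_closure_iff]
      intro ε hε
      obtain ⟨n, hn⟩ := exists_nat_one_div_lt hε
      obtain ⟨q, hq⟩ := h n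
      exact ⟨∑ i, (q i : ℝ) • xs i,
        Submodule.sum_smul_mem _ _ (fun i _ => Submodule.subset_span ⟨i, rfl⟩),
        lt_trans hq (by exact_mod_cast hn)⟩
    exact hcl.closure_subset this

lemma measurableSet_span :
    MeasurableSet {p : (Fin m → (Fin d → ℝ)) × (Fin d → ℝ) |
      p.2 ∈ Submodule.span ℝ (Set.range p.1)} := by
  rw [span_set_eq]
  refine MeasurableSet.iInter fun n => MeasurableSet.iUnion fun q => ?_
  have : Continuous (fun p : (Fin m → (Fin d → ℝ)) × (Fin d → ℝ) =>
      dist p.2 (∑ i, (q i : ℝ) • p.1 i)) :=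
    Continuous.dist continuous_snd (by fun_prop)
  exact (isOpen_lt this continuous_const).measurableSet

section Main
variable (d m : ℕ)

/-- the "bad" event for coordinate i among m+1 samples -/
def badE (i : Fin (m + 1)) : Set (Fin (m + 1) → (Fin d → ℝ)) :=
  {ys | ys i ∉ Submodule.span ℝ (Set.range (fun j => ys (i.succAbove j)))}

lemma badE_eq (i : Fin (m + 1)) :
    badE d m i = {ys | ys i ∉ Submodule.span ℝ (ys '' ({i}ᶜ : Set (Fin (m+1))))} := by
  ext ys
  simp only [badE, Set.mem_setOf_eq]
  rw [show (fun j => ys (i.succAbove j)) = ys ∘ i.succAbove from rfl,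
    Set.range_comp, Fin.range_succAbove]

lemma badE_measurable (i : Fin (m + 1)) : MeasurableSet (badE d m i) := by
  have hg : Measurable (fun ys : Fin (m+1) → (Fin d → ℝ) =>
      ((fun j => ys (i.succAbove j), ys i) : (Fin m → (Fin d → ℝ)) × (Fin d → ℝ))) :=
    (measurable_pi_lambda _ fun j => measurable_pi_apply _).prodMk (measurable_pi_apply i)
  exact hg (measurableSet_span.compl)

open scoped Classical in
lemma card_bad_le (ys : Fin (m + 1) → (Fin d → ℝ)) :
    (Finset.univ.filter fun i => ys ∈ badE d m i).card ≤ d := by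
  set s := Finset.univ.filter fun i => ys ∈ badE d m i with hs
  have hli : LinearIndependent ℝ (fun i : s => ys i) := by
    rw [linearIndependent_iff_notMem_span]
    intro i hi
    have hmem : ys ∈ badE d m (i : Fin (m+1)) := (Finset.mem_filter.1 i.2).2
    rw [badE_eq] at hmem
    simp only [Set.mem_setOf_eq] at hmem
    refine hmem (Submodule.span_mono ?_ hi)
    rintro y ⟨j, ⟨_, hj⟩, rfl⟩
    exact ⟨j, fun h => hj (Subtype.ext (by exact h)), rfl⟩
  have := hli.fintype_card_le_finrank
  simpa [Module.finrank_fin_fun] using this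

variable (D : Measure (Fin d → ℝ)) [IsProbabilityMeasure D]

lemma badE_measure_eq (i : Fin (m + 1)) :
    (Measure.pi fun _ : Fin (m+1) => D) (badE d m i)
      = (Measure.pi fun _ : Fin (m+1) => D) (badE d m (Fin.last m)) := by
  set σ := Equiv.swap i (Fin.last m) with hσ
  set Φ := MeasurableEquiv.piCongrLeft (fun _ : Fin (m+1) => (Fin d → ℝ)) σ with hΦdef
  have hmp : MeasurePreserving Φ (Measure.pi fun _ : Fin (m+1) => D)
      (Measure.pi fun _ : Fin (m+1) => D) :=
    measurePreserving_piCongrLeft (fun _ => D) σ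
  have hΦ : ∀ ys : Fin (m+1) → (Fin d → ℝ), (Φ ys : Fin (m+1) → Fin d → ℝ) = fun j => ys (σ j) := by
    intro ys
    funext j
    have h1 : Φ ys (σ (σ j)) = ys (σ j) := by
      rw [hΦdef, MeasurableEquiv.piCongrLeft_apply_apply]
    simpa [hσ, Equiv.swap_apply_self] using h1
  have hpre : Φ ⁻¹' (badE d m (Fin.last m)) = badE d m i := by
    ext ys
    rw [Set.mem_preimage, badE_eq, badE_eq]
    simp only [Set.mem_setOf_eq, hΦ ys]
    have h2 : σ (Fin.last m) = i := Equiv.swap_apply_right _ _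
    have h3 : (fun j => ys (σ j)) '' ({Fin.last m}ᶜ : Set (Fin (m+1)))
        = ys '' ({i}ᶜ : Set (Fin (m+1))) := by
      rw [show (fun j => ys (σ j)) = ys ∘ σ from rfl, Set.image_comp,
        Set.image_compl_eq σ.bijective, Set.image_singleton, h2]
    rw [h2, h3]
  rw [← hpre]
  exact hmp.measure_preimage (badE_measurable d m (Fin.last m)).nullMeasurableSet

lemma mul_badE_le :
    ((m : ℝ≥0∞) + 1) * (Measure.pi fun _ : Fin (m+1) => D) (badE d m (Fin.last m))
      ≤ (d : ℝ≥0∞) := by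
  classical
  set μM := (Measure.pi fun _ : Fin (m+1) => D) with hμM
  have hsum : ∑ i : Fin (m+1), μM (badE d m i)
      = ((m : ℝ≥0∞) + 1) * μM (badE d m (Fin.last m)) := by
    rw [Finset.sum_congr rfl fun i _ => badE_measure_eq d m D i, Finset.sum_const,
      Finset.card_univ, Fintype.card_fin, nsmul_eq_mul]
    push_cast
    ring
  rw [← hsum]
  have h1 : ∑ i : Fin (m+1), μM (badE d m i)
      = ∫⁻ ys, ∑ i : Fin (m+1), (badE d m i).indicator (fun _ => (1:ℝ≥0∞)) ys ∂μM := by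
    rw [lintegral_finset_sum _ fun i _ =>
      measurable_const.indicator (badE_measurable d m i)]
    exact Finset.sum_congr rfl fun i _ =>
      (lintegral_indicator_one (badE_measurable d m i)).symm
  rw [h1]
  have h2 : ∀ ys : Fin (m+1) → Fin d → ℝ,
      ∑ i : Fin (m+1), (badE d m i).indicator (fun _ => (1:ℝ≥0∞)) ys ≤ (d : ℝ≥0∞) := by
    intro ys
    have : ∑ i : Fin (m+1), (badE d m i).indicator (fun _ => (1:ℝ≥0∞)) ys
        = ((Finset.univ.filter fun i => ys ∈ badE d m i).card : ℝ≥0∞) := by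
      rw [Finset.card_filter]
      push_cast
      refine Finset.sum_congr rfl fun i _ => ?_
      by_cases h : ys ∈ badE d m i <;> simp [Set.indicator, h]
    rw [this]
    exact_mod_cast Nat.cast_le.2 (card_bad_le d m ys)
  calc ∫⁻ ys, ∑ i : Fin (m+1), (badE d m i).indicator (fun _ => (1:ℝ≥0∞)) ys ∂μM
      ≤ ∫⁻ _, (d : ℝ≥0∞) ∂μM := lintegral_mono h2
    _ = (d : ℝ≥0∞) := by rw [lintegral_const, measure_univ, mul_one]

lemma measurableSet_T : MeasurableSet {p : (Fin d → ℝ) × (Fin m → Fin d → ℝ) |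
    p.1 ∉ Submodule.span ℝ (Set.range p.2)} := by
  have : {p : (Fin d → ℝ) × (Fin m → Fin d → ℝ) | p.1 ∉ Submodule.span ℝ (Set.range p.2)}
      = Prod.swap ⁻¹' {p : (Fin m → (Fin d → ℝ)) × (Fin d → ℝ) |
          p.2 ∈ Submodule.span ℝ (Set.range p.1)}ᶜ := rfl
  rw [this]
  exact measurable_swap measurableSet_span.compl

lemma lintegral_f_eq :
    ∫⁻ xs, D {x | x ∉ Submodule.span ℝ (Set.range xs)} ∂(Measure.pi fun _ : Fin m => D)
      = (Measure.pi fun _ : Fin (m+1) => D) (badE d m (Fin.last m)) := by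
  set T : Set ((Fin d → ℝ) × (Fin m → Fin d → ℝ)) :=
    {p | p.1 ∉ Submodule.span ℝ (Set.range p.2)} with hT
  have hTm : MeasurableSet T := measurableSet_T d m
  have he := measurePreserving_piFinSuccAbove (fun _ : Fin (m+1) => D) (Fin.last m)
  have hpre : (MeasurableEquiv.piFinSuccAbove (fun _ => Fin d → ℝ) (Fin.last m)) ⁻¹' T
      = badE d m (Fin.last m) := rfl
  rw [← hpre, he.measure_preimage hTm.nullMeasurableSet,
    Measure.prod_apply_symm hTm]
  rfl

end Main

/-- Let x_1,...,x_m be sampled i.i.d. from a distribution D over R^d, and δ ∈ (0,1).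
Then with probability at least 1-δ over the sample, the probability (over a fresh
independent x ~ D) that x is not in the span of x_1,...,x_m is at most d/(δ(m+1)). -/
theorem prob_fresh_not_in_span_le (d m : ℕ) (D : Measure (Fin d → ℝ))
    [IsProbabilityMeasure D] (δ : ℝ) (hδ : δ ∈ Set.Ioo (0 : ℝ) 1) :
    (Measure.pi fun _ : Fin m => D)
      {xs : Fin m → Fin d → ℝ |
        D {x : Fin d → ℝ | x ∉ Submodule.span ℝ (Set.range xs)}
          ≤ ENNReal.ofReal (d / (δ * (m + 1)))}
      ≥ 1 - ENNReal.ofReal δ := by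
  obtain ⟨hδ0, hδ1⟩ := hδ
  set μm := (Measure.pi fun _ : Fin m => D) with hμm
  set f : (Fin m → Fin d → ℝ) → ℝ≥0∞ :=
    fun xs => D {x : Fin d → ℝ | x ∉ Submodule.span ℝ (Set.range xs)} with hf
  have hfm : Measurable f := by
    have : f = fun xs => D (Prod.mk xs ⁻¹' {p : (Fin m → (Fin d → ℝ)) × (Fin d → ℝ) |
        p.2 ∈ Submodule.span ℝ (Set.range p.1)}ᶜ) := rfl
    rw [this]
    exact measurable_measure_prodMk_left measurableSet_span.compl
  rcases Nat.eq_zero_or_pos d with hd | hd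
  · subst hd
    have : {xs : Fin m → Fin 0 → ℝ | f xs ≤ ENNReal.ofReal (0 / (δ * (m + 1)))} = Set.univ := by
      refine Set.eq_univ_of_forall fun xs => ?_
      have : {x : Fin 0 → ℝ | x ∉ Submodule.span ℝ (Set.range xs)} = ∅ := by
        refine Set.eq_empty_of_forall_notMem fun x hx => hx ?_
        have : x = 0 := Subsingleton.elim _ _
        rw [this]; exact Submodule.zero_mem _
      show f xs ≤ _
      rw [hf]; simp only [this, measure_empty]; exact zero_le
    push_cast
    rw [this, measure_univ]
    exact le_trans tsub_le_self le_rfl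
  · -- d > 0
    set c := ENNReal.ofReal (d / (δ * (m + 1))) with hc
    have hcpos : (0:ℝ) < (d:ℝ) / (δ * (m + 1)) := by positivity
    have hc0 : c ≠ 0 := by
      rw [hc]
      simpa using hcpos
    have hc0' : c ≠ 0 := hc0
    have hctop : c ≠ ∞ := ENNReal.ofReal_ne_top
    -- integral bound
    have hI : ∫⁻ xs, f xs ∂μm ≤ (d : ℝ≥0∞) / ((m : ℝ≥0∞) + 1) := by
      rw [hf, hμm, lintegral_f_eq d m D, ENNReal.le_div_iff_mul_le (by simp) (by simp),
        mul_comm]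
      exact mul_badE_le d m D
    -- Markov
    have hmk : μm {xs | c ≤ f xs} ≤ ENNReal.ofReal δ := by
      have h1 : μm {xs | c ≤ f xs} ≤ (∫⁻ xs, f xs ∂μm) / c :=
        meas_ge_le_lintegral_div hfm.aemeasurable hc0 hctop
      have h2 : (d : ℝ≥0∞) / ((m : ℝ≥0∞) + 1) / c = ENNReal.ofReal δ := by
        have hd' : (0:ℝ) < d := by exact_mod_cast hd
        have hm' : (0:ℝ) < (m:ℝ) + 1 := by positivity
        rw [hc, show ((d : ℝ≥0∞) / ((m : ℝ≥0∞) + 1)) = ENNReal.ofReal ((d:ℝ)/((m:ℝ)+1)) by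
            rw [ENNReal.ofReal_div_of_pos hm']
            congr 1
            · exact (ENNReal.ofReal_natCast d).symm
            · rw [ENNReal.ofReal_add (by positivity) zero_le_one]
              simp [ENNReal.ofReal_natCast],
          ← ENNReal.ofReal_div_of_pos hcpos]
        congr 1
        field_simp
      calc μm {xs | c ≤ f xs} ≤ (∫⁻ xs, f xs ∂μm) / c := h1
        _ ≤ (d : ℝ≥0∞) / ((m : ℝ≥0∞) + 1) / c := by gcongr
        _ = ENNReal.ofReal δ := h2
    -- conclude
    have hsm : MeasurableSet {xs | f xs ≤ c} := measurableSet_le hfm measurable_const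
    have hcompl : {xs | f xs ≤ c}ᶜ ⊆ {xs | c ≤ f xs} := fun xs hxs =>
      le_of_lt (lt_of_not_ge (by simpa using hxs))
    have hone : μm {xs | f xs ≤ c} + μm {xs | f xs ≤ c}ᶜ = 1 := by
      rw [measure_add_measure_compl hsm, measure_univ]
    show 1 - ENNReal.ofReal δ ≤ μm {xs | f xs ≤ c}
    rw [tsub_le_iff_right]
    calc (1:ℝ≥0∞) = μm {xs | f xs ≤ c} + μm {xs | f xs ≤ c}ᶜ := hone.symm
      _ ≤ μm {xs | f xs ≤ c} + ENNReal.ofReal δ := by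
          gcongr
          exact le_trans (measure_mono hcompl) hmk
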